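/- Let X, X₁ be binary, S, N independent binary with Y₁ = X₁ ⊕ S, H(S) = 1, and let U, A, V, Y, S_d = S, Ŝ_d be random variables with Ŝ_d a deterministic function of (X, X₁, Y, V), S independent of (U,A,X,X₁,Y), and the Markov chain structure of the hybrid scheme. If E[S ⊕ Ŝ_d] = 0 (zero Hamming distortion), then I(V; Y₁ | U A X₁ Y) = H(S) = 1. -/

import Mathlib

open Finset
open scoped Classical

namespace ISAC

variable {Ω : Type*} [Fintype Ω]

/-- `p` is a probability mass function on the finite sample space `Ω`. -/
def IsPMF (p : Ω → ℝ) : Prop := (∀ ω, 0 ≤ p ω) ∧ ∑ ω, p ω = 1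

/-- Probability that the random variable `X` takes the value `x`. -/
noncomputable def pr (p : Ω → ℝ) {α : Type*} (X : Ω → α) (x : α) : ℝ :=
  ∑ ω, if X ω = x then p ω else 0

/-- Shannon entropy (in bits) of the random variable `X`. -/
noncomputable def ent (p : Ω → ℝ) {α : Type*} [Fintype α] (X : Ω → α) : ℝ :=
  -∑ x, pr p X x * Real.logb 2 (pr p X x)

/-- Conditional entropy `H(X | Z)`. -/
noncomputable def condEnt (p : Ω → ℝ) {α β : Type*} [Fintype α] [Fintype β] (X : Ω → α) (Z : Ω → β) : ℝ :=
  ent p (fun ω => (X ω, Z ω)) - ent p Z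

/-- Mutual information `I(X;Y)`. -/
noncomputable def mi (p : Ω → ℝ) {α β : Type*} [Fintype α] [Fintype β] (X : Ω → α) (Y : Ω → β) : ℝ :=
  ent p X + ent p Y - ent p (fun ω => (X ω, Y ω))

/-- Conditional mutual information `I(X;Y|Z)`. -/
noncomputable def cmi (p : Ω → ℝ) {α β γ : Type*} [Fintype α] [Fintype β] [Fintype γ] (X : Ω → α) (Y : Ω → β) (Z : Ω → γ) : ℝ :=
  ent p (fun ω => (X ω, Z ω)) + ent p (fun ω => (Y ω, Z ω))
    - ent p (fun ω => (X ω, Y ω, Z ω)) - ent p Z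

/-- The Markov chain `A − B − C`: `A` and `C` are conditionally independent given `B`. -/
def Markov (p : Ω → ℝ) {α β γ : Type*} (A : Ω → α) (B : Ω → β) (C : Ω → γ) : Prop :=
  ∀ a b c, pr p (fun ω => (A ω, B ω, C ω)) (a, b, c) * pr p B b
    = pr p (fun ω => (A ω, B ω)) (a, b) * pr p (fun ω => (B ω, C ω)) (b, c)

/-- Independence of the random variables `A` and `B`. -/
def IndepRV (p : Ω → ℝ) {α β : Type*} (A : Ω → α) (B : Ω → β) : Prop :=
  ∀ a b, pr p (fun ω => (A ω, B ω)) (a, b) = pr p A a * pr p B b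

/-- Expectation of a real-valued function of the outcome. -/
noncomputable def expect (p : Ω → ℝ) (f : Ω → ℝ) : ℝ := ∑ ω, p ω * f ω

end ISAC

open ISAC

section Helpers
variable {Ω : Type*} [Fintype Ω] {p : Ω → ℝ}

lemma pr_nonneg (hp : ∀ ω, 0 ≤ p ω) {α : Type*} (X : Ω → α) (x : α) : 0 ≤ pr p X x := by
  apply Finset.sum_nonneg; intro ω _
  by_cases h : X ω = x <;> simp [h, hp ω]

lemma sum_pr (hp : IsPMF p) {α : Type*} [Fintype α] (X : Ω → α) : ∑ x, pr p X x = 1 := by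
  unfold pr
  rw [Finset.sum_comm, ← hp.2]
  exact Finset.sum_congr rfl fun ω _ => by simp

lemma pr_comp {τ κ : Type*} [Fintype τ] (T : Ω → τ) (f : τ → κ) (c : κ) :
    pr p (fun ω => f (T ω)) c = ∑ t, if f t = c then pr p T t else 0 := by
  unfold pr
  have : ∀ t : τ, (if f t = c then ∑ ω, if T ω = t then p ω else 0 else 0)
      = ∑ ω, if f t = c ∧ T ω = t then p ω else 0 := by
    intro t; by_cases h : f t = c <;> simp [h]
  rw [Finset.sum_congr rfl fun t _ => this t, Finset.sum_comm]
  apply Finset.sum_congr rfl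
  intro ω _
  rw [Finset.sum_eq_single (T ω)]
  · simp
  · intro t _ ht
    simp [Ne.symm ht]
  · simp

lemma pr_pos_exists (hp : ∀ ω, 0 ≤ p ω) {α : Type*} {X : Ω → α} {x : α}
    (h : 0 < pr p X x) : ∃ ω, p ω ≠ 0 ∧ X ω = x := by
  by_contra hc
  push_neg at hc
  have : pr p X x = 0 := by
    apply Finset.sum_eq_zero; intro ω _
    by_cases hx : X ω = x
    · by_cases hp0 : p ω = 0
      · simp [hx, hp0]
      · exact absurd hx (hc ω hp0)
    · simp [hx]
  linarith

lemma le_pr_apply (hp : ∀ ω, 0 ≤ p ω) {α : Type*} (X : Ω → α) (ω : Ω) :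
    p ω ≤ pr p X (X ω) := by
  have := Finset.single_le_sum (f := fun ω' => if X ω' = X ω then p ω' else 0)
    (fun ω' _ => by split <;> simp [hp ω']) (Finset.mem_univ ω)
  simpa [pr] using this

lemma ent_of_inj {α β : Type*} [Fintype α] [Fintype β] (hp : ∀ ω, 0 ≤ p ω)
    {T : Ω → β} {R : Ω → α} {h : α → β} (hinj : Function.Injective h)
    (hTR : ∀ ω, p ω ≠ 0 → T ω = h (R ω)) : ent p T = ent p R := by
  have key : ∀ a, pr p T (h a) = pr p R a := by
    intro a
    apply Finset.sum_congr rfl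
    intro ω _
    by_cases hp0 : p ω = 0
    · simp [hp0]
    · rw [hTR ω hp0]
      by_cases hr : R ω = a
      · simp [hr]
      · have : h (R ω) ≠ h a := fun he => hr (hinj he)
        simp [hr, this]
  have zero : ∀ b, b ∉ Finset.image h Finset.univ → pr p T b = 0 := by
    intro b hb
    apply Finset.sum_eq_zero
    intro ω _
    by_cases hp0 : p ω = 0
    · simp [hp0]
    · rw [hTR ω hp0]
      have : h (R ω) ≠ b := fun he => hb (he ▸ Finset.mem_image_of_mem h (Finset.mem_univ _))
      simp [this]
  unfold ent
  congr 1
  rw [← Finset.sum_subset (Finset.subset_univ (Finset.image h Finset.univ))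
      (fun b _ hb => by simp [zero b hb])]
  rw [Finset.sum_image (fun a _ a' _ he => hinj he)]
  exact Finset.sum_congr rfl fun a _ => by rw [key]

lemma logb_half_mul {q : ℝ} (hq : 0 ≤ q) :
    (1/2*q) * Real.logb 2 (1/2*q) = (q * Real.logb 2 q - q)/2 := by
  rcases eq_or_lt_of_le hq with h | h
  · simp [← h]
  · have : Real.logb 2 (1/2*q) = Real.logb 2 q - 1 := by
      rw [show (1/2*q : ℝ) = q / 2 by ring, Real.logb_div (ne_of_gt h) (by norm_num)]
      simp [Real.logb_self_eq_one]
    rw [this]; ring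

lemma ent_coin_pair {β : Type*} [Fintype β] (hp : IsPMF p) (Y₁ : Ω → Bool) (Z : Ω → β)
    (h : ∀ b z, pr p (fun ω => (Y₁ ω, Z ω)) (b, z) = 1/2 * pr p Z z) :
    ent p (fun ω => (Y₁ ω, Z ω)) = 1 + ent p Z := by
  unfold ent
  rw [Fintype.sum_prod_type]
  have : ∀ b : Bool, ∑ z, pr p (fun ω => (Y₁ ω, Z ω)) (b, z)
        * Real.logb 2 (pr p (fun ω => (Y₁ ω, Z ω)) (b, z))
      = (∑ z, pr p Z z * Real.logb 2 (pr p Z z) - 1) / 2 := by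
    intro b
    have : ∀ z, pr p (fun ω => (Y₁ ω, Z ω)) (b, z)
          * Real.logb 2 (pr p (fun ω => (Y₁ ω, Z ω)) (b, z))
        = (pr p Z z * Real.logb 2 (pr p Z z) - pr p Z z)/2 := by
      intro z; rw [h b z]; exact logb_half_mul (pr_nonneg hp.1 Z z)
    rw [Finset.sum_congr rfl fun z _ => this z, ← Finset.sum_div,
      Finset.sum_sub_distrib, sum_pr hp Z]
  rw [Fintype.sum_bool, this true, this false]
  ring

lemma pr_eq_half (hp : IsPMF p) {S : Ω → Bool} (hS : ent p S = 1) (b : Bool) :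
    pr p S b = 1/2 := by
  have hsum : pr p S true + pr p S false = 1 := by
    have := sum_pr hp S; rwa [Fintype.sum_bool] at this
  set a := pr p S true with ha
  have hfa : pr p S false = 1 - a := by linarith
  have hlog2 : Real.log 2 ≠ 0 := ne_of_gt (Real.log_pos (by norm_num))
  have hbin : Real.binEntropy a = Real.log 2 := by
    unfold ent at hS
    rw [Fintype.sum_bool, hfa, ← ha] at hS
    unfold Real.binEntropy
    rw [Real.log_inv, Real.log_inv]
    have e1 : Real.logb 2 a = Real.log a / Real.log 2 := rfl
    have e2 : Real.logb 2 (1-a) = Real.log (1-a) / Real.log 2 := rfl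
    rw [e1, e2] at hS
    field_simp at hS
    linarith
  have : a = 2⁻¹ := Real.binEntropy_eq_log_two.mp hbin
  cases b
  · rw [hfa, this]; norm_num
  · rw [← ha, this]; norm_num

lemma mul_pos_split {a b : ℝ} (ha : 0 ≤ a) (hb : 0 ≤ b) (h : 0 < a * b) :
    0 < a ∧ 0 < b := by
  rcases mul_pos_iff.mp h with ⟨h1, h2⟩ | ⟨h1, h2⟩
  · exact ⟨h1, h2⟩
  · linarith

end Helpers


section Stmt13

variable {Ω 𝒰 𝒜 𝒴 𝒱 : Type*} [Fintype Ω]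
  [Fintype 𝒰] [Fintype 𝒜] [Fintype 𝒴] [Fintype 𝒱]

/-- The joint distribution of `(U, A, X, X₁, S, Y, Y₁, V)` factorizes as
`P_U P_{A|U} P_{X|UA} P_{X₁|U} P_S P_{YY₁|XX₁S} P_{V|UAX₁Y₁}`. -/
def Factorizes13 (p : Ω → ℝ) (U : Ω → 𝒰) (A : Ω → 𝒜) (X X₁ S : Ω → Bool)
    (Y : Ω → 𝒴) (Y₁ : Ω → Bool) (V : Ω → 𝒱) : Prop :=
  ∃ (qU : 𝒰 → ℝ) (qA : 𝒰 → 𝒜 → ℝ) (qX : 𝒰 → 𝒜 → Bool → ℝ) (qX₁ : 𝒰 → Bool → ℝ)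
    (qS : Bool → ℝ) (qYY₁ : Bool → Bool → Bool → 𝒴 × Bool → ℝ)
    (qV : 𝒰 → 𝒜 → Bool → Bool → 𝒱 → ℝ),
    (∀ u, 0 ≤ qU u) ∧ (∑ u, qU u = 1) ∧
    (∀ u a, 0 ≤ qA u a) ∧ (∀ u, ∑ a, qA u a = 1) ∧
    (∀ u a x, 0 ≤ qX u a x) ∧ (∀ u a, ∑ x, qX u a x = 1) ∧
    (∀ u x₁, 0 ≤ qX₁ u x₁) ∧ (∀ u, ∑ x₁, qX₁ u x₁ = 1) ∧
    (∀ s, 0 ≤ qS s) ∧ (∑ s, qS s = 1) ∧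
    (∀ x x₁ s z, 0 ≤ qYY₁ x x₁ s z) ∧ (∀ x x₁ s, ∑ z, qYY₁ x x₁ s z = 1) ∧
    (∀ u a x₁ y₁ v, 0 ≤ qV u a x₁ y₁ v) ∧ (∀ u a x₁ y₁, ∑ v, qV u a x₁ y₁ v = 1) ∧
    ∀ u a x x₁ s y y₁ v,
      pr p (fun ω => (U ω, A ω, X ω, X₁ ω, S ω, Y ω, Y₁ ω, V ω)) (u, a, x, x₁, s, y, y₁, v)
        = qU u * qA u a * qX u a x * qX₁ u x₁ * qS s * qYY₁ x x₁ s (y, y₁)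
            * qV u a x₁ y₁ v

/-- For the hybrid scheme with `Y₁ = X₁ ⊕ S`, uniform `S` (`H(S) = 1`) independent of
`(U,A,X,X₁,Y)`, and `Ŝ_d = F(X,X₁,Y,V)` a deterministic estimator: if the expected Hamming
distortion is zero, then `I(V;Y₁|UAX₁Y) = H(S) = 1`. -/
theorem stmt_13 (p : Ω → ℝ) (hp : IsPMF p)
    (U : Ω → 𝒰) (A : Ω → 𝒜) (X X₁ S : Ω → Bool) (Y : Ω → 𝒴) (Y₁ : Ω → Bool) (V : Ω → 𝒱)
    (hfac : Factorizes13 p U A X X₁ S Y Y₁ V)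
    (hY₁ : ∀ ω, Y₁ ω = Bool.xor (X₁ ω) (S ω))
    (hS : ent p S = 1)
    (hSindep : IndepRV p S (fun ω => (U ω, A ω, X ω, X₁ ω, Y ω)))
    (F : Bool × Bool × 𝒴 × 𝒱 → Bool)
    (hdist : expect p
        (fun ω => if Bool.xor (S ω) (F (X ω, X₁ ω, Y ω, V ω)) then 1 else 0) = 0) :
    cmi p V Y₁ (fun ω => (U ω, A ω, X₁ ω, Y ω)) = ent p S ∧ ent p S = 1 := by
  obtain ⟨qU, qA, qX, qX₁, qS, qYY₁, qV, hqU0, hqU1, hqA0, hqA1, hqX0, hqX1,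
    hqX₁0, hqX₁1, hqS0, hqS1, hqY0, hqY1, hqV0, hqV1, hjoint⟩ := hfac
  have hp0 : ∀ ω, 0 ≤ p ω := hp.1
  set T : Ω → 𝒰 × 𝒜 × Bool × Bool × Bool × 𝒴 × Bool × 𝒱 :=
    fun ω => (U ω, A ω, X ω, X₁ ω, S ω, Y ω, Y₁ ω, V ω) with hT
  set W : Ω → 𝒰 × 𝒜 × Bool × Bool × 𝒴 :=
    fun ω => (U ω, A ω, X ω, X₁ ω, Y ω) with hW
  set Z : Ω → 𝒰 × 𝒜 × Bool × 𝒴 :=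
    fun ω => (U ω, A ω, X₁ ω, Y ω) with hZ
  -- zero distortion pointwise
  have hsupp : ∀ ω, p ω ≠ 0 → F (X ω, X₁ ω, Y ω, V ω) = S ω := by
    intro ω hω
    have h0 := (Finset.sum_eq_zero_iff_of_nonneg (fun ω' _ =>
      mul_nonneg (hp0 ω') (by split <;> norm_num))).mp hdist ω (Finset.mem_univ ω)
    rcases mul_eq_zero.mp h0 with h | h
    · exact absurd h hω
    · cases h1 : S ω <;> cases h2 : F (X ω, X₁ ω, Y ω, V ω) <;> simp_all
  -- S is uniform
  have hS2 : ∀ b, pr p S b = 1/2 := pr_eq_half hp hS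
  -- hqY1 in iterated form
  have hqY1' : ∀ x x₁ s, ∑ y, ∑ y₁, qYY₁ x x₁ s (y, y₁) = 1 := by
    intro x x₁ s; rw [← Fintype.sum_prod_type]; exact hqY1 x x₁ s
  -- joint of (S, W)
  have hSW : ∀ s u a x x₁ y,
      pr p (fun ω => (S ω, W ω)) (s, (u, a, x, x₁, y))
        = qU u * qA u a * qX u a x * qX₁ u x₁ * qS s * ∑ y₁, qYY₁ x x₁ s (y, y₁) := by
    intro s u a x x₁ y
    have step : ∀ ω, (@ite ℝ ((S ω, W ω) = (s, (u, a, x, x₁, y))) (Classical.propDecidable _) (p ω) 0)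
        = ∑ y₁, ∑ v, (@ite ℝ (T ω = (u, a, x, x₁, s, y, y₁, v)) (Classical.propDecidable _) (p ω) 0) := by
      intro ω
      by_cases hc : S ω = s ∧ U ω = u ∧ A ω = a ∧ X ω = x ∧ X₁ ω = x₁ ∧ Y ω = y
      · obtain ⟨e0, e1, e2, e3, e4, e5⟩ := hc
        simp only [hT, hW, Prod.mk.injEq, e0, e1, e2, e3, e4, e5]
        cases hYω : Y₁ ω <;> simp [hYω]
      · have hL : ¬((S ω, W ω) = (s, (u, a, x, x₁, y))) := by
          simp only [hW, Prod.mk.injEq]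
          tauto
        rw [if_neg hL]
        symm
        apply Finset.sum_eq_zero
        intro y₁ _
        apply Finset.sum_eq_zero
        intro v _
        rw [if_neg]
        simp only [hT, Prod.mk.injEq]
        tauto
    have mid : (∑ ω, @ite ℝ ((S ω, W ω) = (s, (u, a, x, x₁, y))) (Classical.propDecidable _) (p ω) 0)
        = ∑ y₁, ∑ v, pr p T (u, a, x, x₁, s, y, y₁, v) := by
      rw [Finset.sum_congr rfl fun ω _ => step ω, Finset.sum_comm]
      exact Finset.sum_congr rfl fun y₁ _ => Finset.sum_comm
    calc pr p (fun ω => (S ω, W ω)) (s, (u, a, x, x₁, y))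
        = ∑ y₁, ∑ v, pr p T (u, a, x, x₁, s, y, y₁, v) := mid
      _ = ∑ y₁, ∑ v, qU u * qA u a * qX u a x * qX₁ u x₁ * qS s * qYY₁ x x₁ s (y, y₁)
            * qV u a x₁ y₁ v :=
          Finset.sum_congr rfl fun y₁ _ => Finset.sum_congr rfl fun v _ => hjoint u a x x₁ s y y₁ v
      _ = ∑ y₁, qU u * qA u a * qX u a x * qX₁ u x₁ * qS s * qYY₁ x x₁ s (y, y₁) := by
          apply Finset.sum_congr rfl
          intro y₁ _
          rw [← Finset.mul_sum, hqV1, mul_one]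
      _ = qU u * qA u a * qX u a x * qX₁ u x₁ * qS s * ∑ y₁, qYY₁ x x₁ s (y, y₁) := by
          rw [← Finset.mul_sum]
  -- qS is uniform
  have hqS : ∀ s, qS s = 1/2 := by
    intro s
    have step : ∀ ω, (@ite ℝ (S ω = s) (Classical.propDecidable _) (p ω) 0)
        = ∑ w : 𝒰 × 𝒜 × Bool × Bool × 𝒴,
            @ite ℝ ((S ω, W ω) = (s, w)) (Classical.propDecidable _) (p ω) 0 := by
      intro ω
      rw [Finset.sum_eq_single (W ω)]
      · by_cases hc : S ω = s <;> simp [hc, Prod.mk.injEq]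
      · intro w _ hw
        exact if_neg (fun h => hw ((congrArg Prod.snd h).symm))
      · intro h; exact absurd (Finset.mem_univ _) h
    have e1 : pr p S s = ∑ w : 𝒰 × 𝒜 × Bool × Bool × 𝒴,
        pr p (fun ω => (S ω, W ω)) (s, w) := by
      have mid : (∑ ω, @ite ℝ (S ω = s) (Classical.propDecidable _) (p ω) 0)
          = ∑ w : 𝒰 × 𝒜 × Bool × Bool × 𝒴,
              pr p (fun ω => (S ω, W ω)) (s, w) := by
        rw [Finset.sum_congr rfl fun ω _ => step ω]
        exact Finset.sum_comm
      exact mid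
    have e2 : ∑ w : 𝒰 × 𝒜 × Bool × Bool × 𝒴,
        pr p (fun ω => (S ω, W ω)) (s, w) = qS s := by
      simp only [Fintype.sum_prod_type]
      simp only [hSW]
      calc ∑ u, ∑ a, ∑ x, ∑ x₁, ∑ y,
            qU u * qA u a * qX u a x * qX₁ u x₁ * qS s * ∑ y₁, qYY₁ x x₁ s (y, y₁)
          = ∑ u, ∑ a, ∑ x, ∑ x₁, qU u * qA u a * qX u a x * qX₁ u x₁ * qS s := by
            refine Finset.sum_congr rfl fun u _ => Finset.sum_congr rfl fun a _ =>
              Finset.sum_congr rfl fun x _ => Finset.sum_congr rfl fun x₁ _ => ?_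
            rw [← Finset.mul_sum, hqY1', mul_one]
        _ = ∑ u, ∑ a, ∑ x, qU u * qA u a * qX u a x * qS s := by
            refine Finset.sum_congr rfl fun u _ => Finset.sum_congr rfl fun a _ =>
              Finset.sum_congr rfl fun x _ => ?_
            rw [← Finset.sum_mul, ← Finset.mul_sum, hqX₁1, mul_one]
        _ = ∑ u, ∑ a, qU u * qA u a * qS s := by
            refine Finset.sum_congr rfl fun u _ => Finset.sum_congr rfl fun a _ => ?_
            rw [← Finset.sum_mul, ← Finset.mul_sum, hqX1, mul_one]
        _ = ∑ u, qU u * qS s := by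
            refine Finset.sum_congr rfl fun u _ => ?_
            rw [← Finset.sum_mul, ← Finset.mul_sum, hqA1, mul_one]
        _ = qS s := by rw [← Finset.sum_mul, hqU1, one_mul]
    rw [← e2, ← e1, hS2 s]
  -- tuples violating Y₁ = X₁ ⊕ S have probability 0
  have hzero : ∀ u a x x₁ s y y₁ v, y₁ ≠ Bool.xor x₁ s →
      pr p T (u, a, x, x₁, s, y, y₁, v) = 0 := by
    intro u a x x₁ s y y₁ v hne
    apply Finset.sum_eq_zero
    intro ω _
    rw [if_neg]
    intro h
    simp only [hT, Prod.mk.injEq] at h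
    exact hne (by rw [← h.2.2.2.2.2.2.1, hY₁ ω, h.2.2.2.1, h.2.2.2.2.1])
  -- hence qYY₁ puts no mass on wrong y₁ (on reachable prefixes)
  have hqYzero : ∀ u a x x₁ s y y₁, qU u * qA u a * qX u a x * qX₁ u x₁ ≠ 0 →
      y₁ ≠ Bool.xor x₁ s → qYY₁ x x₁ s (y, y₁) = 0 := by
    intro u a x x₁ s y y₁ hpre hne
    obtain ⟨v, hv⟩ : ∃ v, qV u a x₁ y₁ v ≠ 0 := by
      by_contra hall
      push_neg at hall
      have h1 := hqV1 u a x₁ y₁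
      rw [Finset.sum_eq_zero (fun v _ => hall v)] at h1
      norm_num at h1
    have h0 := (hjoint u a x x₁ s y y₁ v).symm
    rw [hzero u a x x₁ s y y₁ v hne] at h0
    have hqs : qS s ≠ 0 := by rw [hqS s]; norm_num
    rcases mul_eq_zero.mp h0 with h6 | h6
    · rcases mul_eq_zero.mp h6 with h5 | h5
      · rcases mul_eq_zero.mp h5 with h4 | h4
        · exact absurd h4 hpre
        · exact absurd h4 hqs
      · exact h5
    · exact absurd h6 hv
  -- independence consequence: channel symmetry
  have hswap : ∀ u a x x₁ y, qU u * qA u a * qX u a x * qX₁ u x₁ ≠ 0 →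
      qYY₁ x x₁ false (y, x₁) = qYY₁ x x₁ true (y, !x₁) := by
    intro u a x x₁ y hpre
    have e0 : pr p (fun ω => (S ω, W ω)) (false, (u, a, x, x₁, y))
        = 1/2 * pr p W (u, a, x, x₁, y) := by
      rw [hSindep false (u, a, x, x₁, y), hS2 false]
    have e1 : pr p (fun ω => (S ω, W ω)) (true, (u, a, x, x₁, y))
        = 1/2 * pr p W (u, a, x, x₁, y) := by
      rw [hSindep true (u, a, x, x₁, y), hS2 true]
    have key := (hSW false u a x x₁ y).symm.trans (e0.trans (e1.symm.trans (hSW true u a x x₁ y)))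
    have hsum0 : (∑ y₁, qYY₁ x x₁ false (y, y₁)) = qYY₁ x x₁ false (y, x₁) := by
      rw [Fintype.sum_bool]
      cases x₁
      · rw [hqYzero u a x false false y true hpre (by decide), zero_add]
      · rw [hqYzero u a x true false y false hpre (by decide), add_zero]
    have hsum1 : (∑ y₁, qYY₁ x x₁ true (y, y₁)) = qYY₁ x x₁ true (y, !x₁) := by
      rw [Fintype.sum_bool]
      cases x₁
      · rw [hqYzero u a x false true y false hpre (by decide), add_zero]
        rfl
      · rw [hqYzero u a x true true y true hpre (by decide), zero_add]
        rfl
    rw [hsum0, hsum1, hqS false, hqS true] at key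
    have hne : qU u * qA u a * qX u a x * qX₁ u x₁ * (1/2 : ℝ) ≠ 0 :=
      mul_ne_zero hpre (by norm_num)
    exact mul_left_cancel₀ hne key
  -- positive-probability tuples satisfy F = s
  have hTpos : ∀ u a x x₁ s y y₁ v, 0 < pr p T (u, a, x, x₁, s, y, y₁, v) →
      F (x, x₁, y, v) = s := by
    intro u a x x₁ s y y₁ v h
    obtain ⟨ω, hω, hTω⟩ := pr_pos_exists hp0 h
    simp only [hT, Prod.mk.injEq] at hTω
    obtain ⟨e1, e2, e3, e4, e5, e6, e7, e8⟩ := hTω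
    rw [← e3, ← e4, ← e6, ← e8, ← e5]
    exact hsupp ω hω
  -- the key determinism claim
  have hdet : ∀ ω ω', p ω ≠ 0 → p ω' ≠ 0 → U ω = U ω' → A ω = A ω' →
      X₁ ω = X₁ ω' → V ω = V ω' → Y₁ ω = Y₁ ω' := by
    intro ω ω' hω hω' e1 e2 e3 e4
    by_contra hne
    have hSne : S ω ≠ S ω' := by
      intro h
      exact hne (by rw [hY₁ ω, hY₁ ω', e3, h])
    have posT : ∀ ω0, p ω0 ≠ 0 → 0 < qU (U ω0) * qA (U ω0) (A ω0) * qX (U ω0) (A ω0) (X ω0)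
        * qX₁ (U ω0) (X₁ ω0) * qS (S ω0) * qYY₁ (X ω0) (X₁ ω0) (S ω0) (Y ω0, Y₁ ω0)
        * qV (U ω0) (A ω0) (X₁ ω0) (Y₁ ω0) (V ω0) := by
      intro ω0 h0
      have h1 : 0 < pr p T (T ω0) :=
        lt_of_lt_of_le (lt_of_le_of_ne (hp0 ω0) (Ne.symm h0)) (le_pr_apply hp0 T ω0)
      rwa [show pr p T (T ω0)
          = qU (U ω0) * qA (U ω0) (A ω0) * qX (U ω0) (A ω0) (X ω0)
            * qX₁ (U ω0) (X₁ ω0) * qS (S ω0) * qYY₁ (X ω0) (X₁ ω0) (S ω0) (Y ω0, Y₁ ω0)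
            * qV (U ω0) (A ω0) (X₁ ω0) (Y₁ ω0) (V ω0)
        from hjoint (U ω0) (A ω0) (X ω0) (X₁ ω0) (S ω0) (Y ω0) (Y₁ ω0) (V ω0)] at h1
    have h := posT ω hω
    have h' := posT ω' hω'
    rw [← e1, ← e2, ← e3, ← e4] at h'
    have n4 : ∀ (u : 𝒰) (a : 𝒜) (x x₁ : Bool), 0 ≤ qU u * qA u a * qX u a x * qX₁ u x₁ :=
      fun u a x x₁ => mul_nonneg (mul_nonneg (mul_nonneg (hqU0 u) (hqA0 u a)) (hqX0 u a x)) (hqX₁0 u x₁)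
    obtain ⟨h6, hVpos⟩ := mul_pos_split
      (mul_nonneg (mul_nonneg (n4 _ _ _ _) (hqS0 _)) (hqY0 _ _ _ _)) (hqV0 _ _ _ _ _) h
    obtain ⟨h5, hYpos⟩ := mul_pos_split (mul_nonneg (n4 _ _ _ _) (hqS0 _)) (hqY0 _ _ _ _) h6
    obtain ⟨h4, _⟩ := mul_pos_split (n4 _ _ _ _) (hqS0 _) h5
    obtain ⟨_, hVpos'⟩ := mul_pos_split
      (mul_nonneg (mul_nonneg (n4 _ _ _ _) (hqS0 _)) (hqY0 _ _ _ _)) (hqV0 _ _ _ _ _) h'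
    have hpre : qU (U ω) * qA (U ω) (A ω) * qX (U ω) (A ω) (X ω) * qX₁ (U ω) (X₁ ω) ≠ 0 :=
      ne_of_gt h4
    have hSflip : S ω' = !(S ω) := by
      cases h1 : S ω <;> cases h2 : S ω' <;>
        first
        | rfl
        | (exact absurd (h1.trans h2.symm) hSne)
    have hY₁ω' : Y₁ ω' = Bool.xor (X₁ ω) (S ω') := by rw [hY₁ ω', e3]
    have hflip : 0 < qYY₁ (X ω) (X₁ ω) (S ω') (Y ω, Y₁ ω') := by
      have hsw := hswap (U ω) (A ω) (X ω) (X₁ ω) (Y ω) hpre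
      cases hs : S ω
      · have h2 : S ω' = true := by rw [hSflip, hs]; rfl
        rw [h2, hY₁ω', h2, Bool.xor_true, ← hsw]
        have e : Y₁ ω = X₁ ω := by rw [hY₁ ω, hs, Bool.xor_false]
        rwa [hs, e] at hYpos
      · have h2 : S ω' = false := by rw [hSflip, hs]; rfl
        rw [h2, hY₁ω', h2, Bool.xor_false, hsw]
        have e : Y₁ ω = !(X₁ ω) := by rw [hY₁ ω, hs, Bool.xor_true]
        rwa [hs, e] at hYpos
    have hnewpos : 0 < pr p T (U ω, A ω, X ω, X₁ ω, S ω', Y ω, Y₁ ω', V ω) := by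
      rw [hjoint]
      have hqSpos : 0 < qS (S ω') := by rw [hqS]; norm_num
      exact mul_pos (mul_pos (mul_pos h4 hqSpos) hflip) hVpos'
    have hF1 : F (X ω, X₁ ω, Y ω, V ω) = S ω' :=
      hTpos _ _ _ _ _ _ _ _ hnewpos
    exact hSne ((hsupp ω hω).symm.trans hF1)
  -- Y₁ is a.s. a function of (V, Z)
  have hfun : ∃ g : 𝒱 × (𝒰 × 𝒜 × Bool × 𝒴) → Bool,
      ∀ ω, p ω ≠ 0 → Y₁ ω = g (V ω, Z ω) := by
    refine ⟨fun r => if h : ∃ ω0, p ω0 ≠ 0 ∧ V ω0 = r.1 ∧ Z ω0 = r.2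
      then Y₁ h.choose else false, ?_⟩
    intro ω hω
    have hex : ∃ ω0, p ω0 ≠ 0 ∧ V ω0 = V ω ∧ Z ω0 = Z ω := ⟨ω, hω, rfl, rfl⟩
    show Y₁ ω = dite _ _ _
    rw [dif_pos hex]
    obtain ⟨hc1, hc2, hc3⟩ := hex.choose_spec
    have a1 : U hex.choose = U ω := congrArg (fun t => t.1) hc3
    have a2 : A hex.choose = A ω := congrArg (fun t => t.2.1) hc3
    have a3 : X₁ hex.choose = X₁ ω := congrArg (fun t => t.2.2.1) hc3
    exact (hdet hex.choose ω hc1 hω a1 a2 a3 hc2).symm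
  -- the coin lemma: Y₁ is a fair coin given Z
  have hcoin : ∀ b z, pr p (fun ω => (Y₁ ω, Z ω)) (b, z) = 1/2 * pr p Z z := by
    intro b z
    obtain ⟨u, a, x₁, y⟩ := z
    have hmargZ : pr p Z (u, a, x₁, y) = ∑ x, pr p W (u, a, x, x₁, y) := by
      have step : ∀ ω, (@ite ℝ (Z ω = (u, a, x₁, y)) (Classical.propDecidable _) (p ω) 0)
          = ∑ x, @ite ℝ (W ω = (u, a, x, x₁, y)) (Classical.propDecidable _) (p ω) 0 := by
        intro ω
        by_cases hc : U ω = u ∧ A ω = a ∧ X₁ ω = x₁ ∧ Y ω = y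
        · obtain ⟨c1, c2, c3, c4⟩ := hc
          simp only [hZ, hW, Prod.mk.injEq, c1, c2, c3, c4]
          simp
        · have hL : ¬(Z ω = (u, a, x₁, y)) := by
            simp only [hZ, Prod.mk.injEq]
            tauto
          rw [if_neg hL]
          symm
          apply Finset.sum_eq_zero
          intro x _
          rw [if_neg]
          simp only [hW, Prod.mk.injEq]
          tauto
      have mid : (∑ ω, @ite ℝ (Z ω = (u, a, x₁, y)) (Classical.propDecidable _) (p ω) 0)
          = ∑ x, pr p W (u, a, x, x₁, y) := by
        rw [Finset.sum_congr rfl fun ω _ => step ω]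
        exact Finset.sum_comm
      exact mid
    have hmargYZ : pr p (fun ω => (Y₁ ω, Z ω)) (b, (u, a, x₁, y))
        = ∑ x, pr p (fun ω => (S ω, W ω)) (Bool.xor x₁ b, (u, a, x, x₁, y)) := by
      have step : ∀ ω, (@ite ℝ ((Y₁ ω, Z ω) = (b, (u, a, x₁, y))) (Classical.propDecidable _) (p ω) 0)
          = ∑ x, @ite ℝ ((S ω, W ω) = (Bool.xor x₁ b, (u, a, x, x₁, y)))
              (Classical.propDecidable _) (p ω) 0 := by
        intro ω
        by_cases hc : S ω = Bool.xor x₁ b ∧ U ω = u ∧ A ω = a ∧ X₁ ω = x₁ ∧ Y ω = y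
        · obtain ⟨c0, c1, c2, c3, c4⟩ := hc
          have hYb : Y₁ ω = b := by
            rw [hY₁ ω, c3, c0]
            cases x₁ <;> cases b <;> rfl
          simp only [hZ, hW, Prod.mk.injEq, c0, c1, c2, c3, c4, hYb]
          simp
        · have himp : Y₁ ω = b → X₁ ω = x₁ → S ω = Bool.xor x₁ b := by
            intro hb hx
            rw [← hb, hY₁ ω, hx]
            cases x₁ <;> cases hsw : S ω <;> rfl
          have hL : ¬((Y₁ ω, Z ω) = (b, (u, a, x₁, y))) := by
            simp only [hZ, Prod.mk.injEq]
            intro hh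
            exact hc ⟨himp hh.1 hh.2.2.2.1, hh.2.1, hh.2.2.1, hh.2.2.2.1, hh.2.2.2.2⟩
          rw [if_neg hL]
          symm
          apply Finset.sum_eq_zero
          intro x _
          rw [if_neg]
          simp only [hW, Prod.mk.injEq]
          tauto
      have mid : (∑ ω, @ite ℝ ((Y₁ ω, Z ω) = (b, (u, a, x₁, y))) (Classical.propDecidable _) (p ω) 0)
          = ∑ x, pr p (fun ω => (S ω, W ω)) (Bool.xor x₁ b, (u, a, x, x₁, y)) := by
        rw [Finset.sum_congr rfl fun ω _ => step ω]
        exact Finset.sum_comm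
      exact mid
    rw [hmargYZ]
    have e : ∀ x, pr p (fun ω => (S ω, W ω)) (Bool.xor x₁ b, (u, a, x, x₁, y))
        = 1/2 * pr p W (u, a, x, x₁, y) := by
      intro x
      rw [hSindep (Bool.xor x₁ b) (u, a, x, x₁, y), hS2]
    rw [Finset.sum_congr rfl fun x _ => e x, ← Finset.mul_sum, ← hmargZ]
  -- entropy computations
  obtain ⟨g, hg⟩ := hfun
  have hentVYZ : ent p (fun ω => (V ω, Y₁ ω, Z ω)) = ent p (fun ω => (V ω, Z ω)) := by
    apply ent_of_inj hp0 (h := fun r : 𝒱 × (𝒰 × 𝒜 × Bool × 𝒴) => (r.1, g r, r.2))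
    · intro r r' h
      simp only [Prod.mk.injEq] at h
      exact Prod.ext h.1 h.2.2
    · intro ω hω
      exact Prod.ext rfl (Prod.ext (hg ω hω) rfl)
  have hentYZ : ent p (fun ω => (Y₁ ω, Z ω)) = 1 + ent p Z :=
    ent_coin_pair hp Y₁ Z hcoin
  constructor
  · rw [hS]
    unfold cmi
    rw [hentVYZ, hentYZ]
    ring
  · exact hS

end Stmt13
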